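/- Let $a_1, a_2, a_3$ be pairwise coprime positive integers with $a_1, a_2$ odd and $a_1, a_2, a_3 \geq 2$. Then the rational function $\Delta(t) = \frac{(t^{2 a_1 a_2 a_3} - 1)(t^{a_1} - 1)(t^{a_2} - 1)(t^{2a_3} - 1)}{(t^{a_1 a_2} - 1)(t^{2 a_1 a_3} - 1)(t^{2 a_2 a_3} - 1)(t - 1)}$ is a polynomial satisfying $\Delta(1) = \frac{(2a_1 a_2 a_3)(a_1)(a_2)(2a_3)}{(a_1 a_2)(2a_1 a_3)(2a_2 a_3)} = 1$. -/

import Mathlib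

open Polynomial

private lemma divisors_inter (m n : ℕ) (hm : m ≠ 0) (hn : n ≠ 0) :
    m.divisors ∩ n.divisors = (Nat.gcd m n).divisors := by
  ext d
  simp only [Finset.mem_inter, Nat.mem_divisors, Nat.dvd_gcd_iff]
  constructor
  · rintro ⟨⟨h1, -⟩, ⟨h2, -⟩⟩
    exact ⟨⟨h1, h2⟩, Nat.gcd_ne_zero_left hm⟩
  · rintro ⟨⟨h1, h2⟩, -⟩
    exact ⟨⟨h1, hm⟩, ⟨h2, hn⟩⟩

/-- Alexander polynomial computation of Lemma 4.8: the displayed rational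
function is a polynomial with `Δ(1) = 1`. -/
theorem alexander_poly_lemma_4_8
    (a1 a2 a3 : ℕ) (ha1 : 2 ≤ a1) (ha2 : 2 ≤ a2) (ha3 : 2 ≤ a3)
    (hodd1 : Odd a1) (hodd2 : Odd a2)
    (h12 : Nat.Coprime a1 a2) (h13 : Nat.Coprime a1 a3)
    (h23 : Nat.Coprime a2 a3) :
    (∃ P : Polynomial ℤ,
      (X ^ (2 * a1 * a2 * a3) - 1) * (X ^ a1 - 1) * (X ^ a2 - 1) *
          (X ^ (2 * a3) - 1) =
        P * ((X ^ (a1 * a2) - 1) * (X ^ (2 * a1 * a3) - 1) *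
          (X ^ (2 * a2 * a3) - 1) * (X - 1)) ∧
      P.eval 1 = 1) ∧
    ((2 * a1 * a2 * a3 : ℚ) * a1 * a2 * (2 * a3)) /
        ((a1 * a2 : ℚ) * (2 * a1 * a3) * (2 * a2 * a3)) = 1 := by
  have h10 : a1 ≠ 0 := by omega
  have h20 : a2 ≠ 0 := by omega
  have h30 : a3 ≠ 0 := by omega
  -- gcd computations
  have g23 : Nat.gcd a2 (2 * a3) = 1 := (hodd2.coprime_two_right.mul_right h23)
  have g13 : Nat.gcd a1 (2 * a3) = 1 := (hodd1.coprime_two_right.mul_right h13)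
  have gAB : Nat.gcd (a1 * a2) (2 * a1 * a3) = a1 := by
    have h : 2 * a1 * a3 = a1 * (2 * a3) := by ring
    rw [h, Nat.gcd_mul_left, g23, mul_one]
  have gAC : Nat.gcd (a1 * a2) (2 * a2 * a3) = a2 := by
    have h : 2 * a2 * a3 = (2 * a3) * a2 := by ring
    rw [h, Nat.gcd_mul_right, g13, one_mul]
  have gBC : Nat.gcd (2 * a1 * a3) (2 * a2 * a3) = 2 * a3 := by
    have h : 2 * a1 * a3 = a1 * (2 * a3) := by ring
    have h' : 2 * a2 * a3 = a2 * (2 * a3) := by ring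
    rw [h, h', Nat.gcd_mul_right, h12, one_mul]
  -- divisor sets
  set A := (a1 * a2).divisors with hAdef
  set B := (2 * a1 * a3).divisors with hBdef
  set C := (2 * a2 * a3).divisors with hCdef
  set T := (2 * a1 * a2 * a3).divisors with hTdef
  have hT0 : 2 * a1 * a2 * a3 ≠ 0 := by positivity
  have hsubA : A ⊆ T := Nat.divisors_subset_of_dvd hT0 ⟨2 * a3, by ring⟩
  have hsubB : B ⊆ T := Nat.divisors_subset_of_dvd hT0 ⟨a2, by ring⟩
  have hsubC : C ⊆ T := Nat.divisors_subset_of_dvd hT0 ⟨a1, by ring⟩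
  have hsub : A ∪ B ∪ C ⊆ T :=
    Finset.union_subset (Finset.union_subset hsubA hsubB) hsubC
  have hABi : A ∩ B = a1.divisors := by
    rw [hAdef, hBdef, divisors_inter _ _ (by positivity) (by positivity), gAB]
  have hACi : A ∩ C = a2.divisors := by
    rw [hAdef, hCdef, divisors_inter _ _ (by positivity) (by positivity), gAC]
  have hBCi : B ∩ C = (2 * a3).divisors := by
    rw [hBdef, hCdef, divisors_inter _ _ (by positivity) (by positivity), gBC]
  have h23i : a2.divisors ∩ (2 * a3).divisors = (1 : ℕ).divisors := by
    rw [divisors_inter _ _ h20 (by positivity), g23]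
  -- the polynomial P
  set Φ : ℕ → ℤ[X] := fun d => cyclotomic d ℤ with hΦ
  set P : ℤ[X] := ∏ d ∈ T \ (A ∪ B ∪ C), Φ d with hP
  -- products over divisor sets
  have hprod : ∀ n : ℕ, n ≠ 0 → ∏ d ∈ n.divisors, Φ d = X ^ n - 1 := fun n hn =>
    prod_cyclotomic_eq_X_pow_sub_one (Nat.pos_of_ne_zero hn) ℤ
  have hsd : P * ∏ d ∈ A ∪ B ∪ C, Φ d = ∏ d ∈ T, Φ d :=
    Finset.prod_sdiff hsub
  have e1 : (∏ d ∈ A ∪ B, Φ d) * ∏ d ∈ a1.divisors, Φ d =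
      (∏ d ∈ A, Φ d) * ∏ d ∈ B, Φ d := by
    rw [← hABi]; exact Finset.prod_union_inter
  have e2 : (∏ d ∈ A ∪ B ∪ C, Φ d) * ∏ d ∈ a2.divisors ∪ (2 * a3).divisors, Φ d =
      (∏ d ∈ A ∪ B, Φ d) * ∏ d ∈ C, Φ d := by
    have h3 : (A ∪ B) ∩ C = a2.divisors ∪ (2 * a3).divisors := by
      rw [Finset.union_inter_distrib_right, hACi, hBCi]
    rw [← h3]; exact Finset.prod_union_inter
  have e4 : (∏ d ∈ a2.divisors ∪ (2 * a3).divisors, Φ d) * ∏ d ∈ (1 : ℕ).divisors, Φ d =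
      (∏ d ∈ a2.divisors, Φ d) * ∏ d ∈ (2 * a3).divisors, Φ d := by
    rw [← h23i]; exact Finset.prod_union_inter
  -- main divisibility identity
  have hN : (X ^ (2 * a1 * a2 * a3) - 1) * (X ^ a1 - 1) * (X ^ a2 - 1) *
          (X ^ (2 * a3) - 1) =
      P * ((X ^ (a1 * a2) - 1) * (X ^ (2 * a1 * a3) - 1) *
          (X ^ (2 * a2 * a3) - 1) * (X - 1)) := by
    have hx1 : (X : ℤ[X]) - 1 = ∏ d ∈ (1 : ℕ).divisors, Φ d := by
      rw [hprod 1 one_ne_zero, pow_one]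
    rw [← hprod _ hT0, ← hprod a1 h10, ← hprod a2 h20, ← hprod (2 * a3) (by positivity),
      ← hprod (a1 * a2) (by positivity), ← hprod (2 * a1 * a3) (by positivity),
      ← hprod (2 * a2 * a3) (by positivity), hx1, ← hAdef, ← hBdef, ← hCdef, ← hTdef, ← hsd]
    linear_combination ((P : ℤ[X]) * (∏ d ∈ C, Φ d) * (∏ d ∈ (1:ℕ).divisors, Φ d)) * e1
      + (P * (∏ d ∈ a1.divisors, Φ d) * (∏ d ∈ (1:ℕ).divisors, Φ d)) * e2
      - (P * (∏ d ∈ A ∪ B ∪ C, Φ d) * (∏ d ∈ a1.divisors, Φ d)) * e4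
  constructor
  · refine ⟨P, hN, ?_⟩
    -- cancel (X - 1)^4 using geometric sums
    have hgs : ∀ n : ℕ, (X : ℤ[X]) ^ n - 1 = (∑ i ∈ Finset.range n, X ^ i) * (X - 1) :=
      fun n => (geom_sum_mul X n).symm
    rw [hgs, hgs, hgs, hgs, hgs, hgs, hgs] at hN
    have hxne : ((X : ℤ[X]) - 1) ≠ 0 := by
      intro h
      have := congrArg (Polynomial.eval 2) h
      simp at this
    have hcancel : (∑ i ∈ Finset.range (2 * a1 * a2 * a3), (X : ℤ[X]) ^ i) *
        (∑ i ∈ Finset.range a1, X ^ i) * (∑ i ∈ Finset.range a2, X ^ i) *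
        (∑ i ∈ Finset.range (2 * a3), X ^ i) =
        P * ((∑ i ∈ Finset.range (a1 * a2), X ^ i) *
          (∑ i ∈ Finset.range (2 * a1 * a3), X ^ i) *
          (∑ i ∈ Finset.range (2 * a2 * a3), X ^ i)) := by
      have h4 : ((X : ℤ[X]) - 1) ^ 4 ≠ 0 := pow_ne_zero _ hxne
      apply mul_right_cancel₀ h4
      linear_combination hN
    have heval := congrArg (Polynomial.eval 1) hcancel
    simp only [eval_mul, eval_finset_sum, eval_pow, eval_X, one_pow,
      Finset.sum_const, Finset.card_range, nsmul_eq_mul, mul_one] at heval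
    have hKne : ((a1 * a2 : ℕ) : ℤ) * ((2 * a1 * a3 : ℕ) : ℤ) * ((2 * a2 * a3 : ℕ) : ℤ) ≠ 0 := by
      push_cast
      positivity
    have hfin : P.eval 1 * (((a1 * a2 : ℕ) : ℤ) * ((2 * a1 * a3 : ℕ) : ℤ) *
        ((2 * a2 * a3 : ℕ) : ℤ)) = 1 * (((a1 * a2 : ℕ) : ℤ) * ((2 * a1 * a3 : ℕ) : ℤ) *
        ((2 * a2 * a3 : ℕ) : ℤ)) := by
      push_cast at heval ⊢
      linear_combination -heval
    exact mul_right_cancel₀ hKne hfin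
  · have q1 : (a1 : ℚ) ≠ 0 := Nat.cast_ne_zero.mpr h10
    have q2 : (a2 : ℚ) ≠ 0 := Nat.cast_ne_zero.mpr h20
    have q3 : (a3 : ℚ) ≠ 0 := Nat.cast_ne_zero.mpr h30
    field_simp
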